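/- For any real numbers p ≥ 0, κ2 ∈ [0,1], φ2 ∈ ℝ, P1 > 0 and a12 > 0, the function (κ1, φ1) ↦ |p·κ2·a12·e^{iφ2} + P1·κ1·e^{iφ1}|² on [0,1] × ℝ attains its minimum at κ1* = min(p·κ2·a12/P1, 1) and φ1* = φ2 + π; that is, for all κ1 ∈ [0,1] and all φ1 ∈ ℝ one has |p·κ2·a12·e^{iφ2} + P1·κ1*·e^{i(φ2+π)}|² ≤ |p·κ2·a12·e^{iφ2} + P1·κ1·e^{iφ1}|². -/

import Mathlib

/-- The squared modulus of the aggregate complementary variance at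
receiver 1, `(κ1, φ1) ↦ |p·κ2·a12·e^{iφ2} + P1·κ1·e^{iφ1}|²` on `[0,1] × ℝ`,
attains its minimum at `κ1* = min (p·κ2·a12/P1) 1` and `φ1* = φ2 + π`. -/
theorem stmt0 (p κ2 φ2 P1 a12 : ℝ) (hp : 0 ≤ p) (hκ2 : κ2 ∈ Set.Icc (0:ℝ) 1)
    (hP1 : 0 < P1) (ha12 : 0 < a12) :
    ∀ κ1 ∈ Set.Icc (0:ℝ) 1, ∀ φ1 : ℝ,
      ‖((p * κ2 * a12 : ℝ) : ℂ) * Complex.exp (Complex.I * (φ2 : ℂ))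
          + ((P1 * min (p * κ2 * a12 / P1) 1 : ℝ) : ℂ)
            * Complex.exp (Complex.I * ((φ2 + Real.pi : ℝ) : ℂ))‖ ^ 2
      ≤ ‖((p * κ2 * a12 : ℝ) : ℂ) * Complex.exp (Complex.I * (φ2 : ℂ))
          + ((P1 * κ1 : ℝ) : ℂ) * Complex.exp (Complex.I * ((φ1 : ℝ) : ℂ))‖ ^ 2 := by
  intro κ1 hκ1 φ1
  obtain ⟨hκ10, hκ11⟩ := hκ1
  obtain ⟨hκ20, hκ21⟩ := hκ2
  set A : ℝ := p * κ2 * a12 with hAdef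
  have hA0 : 0 ≤ A := by positivity
  have hC : P1 * min (A / P1) 1 = min A P1 := by
    rw [mul_min_of_nonneg _ _ hP1.le, mul_div_cancel₀ _ hP1.ne', mul_one]
  set B : ℝ := P1 * κ1 with hBdef
  have hB0 : 0 ≤ B := by positivity
  have hBP : B ≤ P1 := by
    calc B = P1 * κ1 := rfl
      _ ≤ P1 * 1 := by nlinarith
      _ = P1 := mul_one _
  -- LHS simplification
  have hπ : Complex.exp (Complex.I * ((φ2 + Real.pi : ℝ) : ℂ))
      = - Complex.exp (Complex.I * (φ2 : ℂ)) := by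
    push_cast
    rw [mul_add, Complex.exp_add, mul_comm Complex.I (Real.pi : ℂ),
      Complex.exp_pi_mul_I]
    ring
  have habs_exp : ‖Complex.exp (Complex.I * (φ2 : ℂ))‖ = 1 := by
    rw [mul_comm, Complex.norm_exp_ofReal_mul_I]
  have hLHS : ‖((A : ℝ) : ℂ) * Complex.exp (Complex.I * (φ2 : ℂ))
      + ((P1 * min (A / P1) 1 : ℝ) : ℂ)
        * Complex.exp (Complex.I * ((φ2 + Real.pi : ℝ) : ℂ))‖
      = A - min A P1 := by
    rw [hπ, hC]
    have : ((A : ℝ) : ℂ) * Complex.exp (Complex.I * (φ2 : ℂ))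
        + ((min A P1 : ℝ) : ℂ) * (- Complex.exp (Complex.I * (φ2 : ℂ)))
        = ((A - min A P1 : ℝ) : ℂ) * Complex.exp (Complex.I * (φ2 : ℂ)) := by
      push_cast; ring
    rw [this, norm_mul, habs_exp, mul_one, Complex.norm_real, Real.norm_eq_abs,
      abs_of_nonneg (by simp [min_le_left])]
  -- RHS lower bound
  set x : ℂ := ((A : ℝ) : ℂ) * Complex.exp (Complex.I * (φ2 : ℂ))
  set y : ℂ := ((B : ℝ) : ℂ) * Complex.exp (Complex.I * ((φ1 : ℝ) : ℂ))
  have hx : ‖x‖ = A := by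
    rw [norm_mul, habs_exp, mul_one, Complex.norm_real, Real.norm_eq_abs, abs_of_nonneg hA0]
  have hy : ‖y‖ = B := by
    rw [norm_mul, mul_comm Complex.I, Complex.norm_exp_ofReal_mul_I, mul_one,
      Complex.norm_real, Real.norm_eq_abs, abs_of_nonneg hB0]
  have hRHS : A - B ≤ ‖x + y‖ := by
    have := norm_sub_norm_le x (-y)
    simp only [sub_neg_eq_add, norm_neg] at this
    have h2 : ‖x‖ - ‖y‖ ≤ ‖x + y‖ := by
      simpa using this
    linarith [hx ▸ hy ▸ h2]
  have hkey : A - min A P1 ≤ ‖x + y‖ := by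
    rcases le_total A P1 with h | h
    · rw [min_eq_left h]; simp [norm_nonneg]
    · rw [min_eq_right h]; linarith
  calc ‖((A : ℝ) : ℂ) * Complex.exp (Complex.I * (φ2 : ℂ))
        + ((P1 * min (A / P1) 1 : ℝ) : ℂ)
          * Complex.exp (Complex.I * ((φ2 + Real.pi : ℝ) : ℂ))‖ ^ 2
      = (A - min A P1) ^ 2 := by rw [hLHS]
    _ ≤ ‖x + y‖ ^ 2 := by
        apply pow_le_pow_left₀ (by simp [min_le_left]) hkey
    _ = _ := rfl
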